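/- arXiv:1709.09253 — 4 statements merged into one kernel-verified Lean document; each statement's English description precedes it below -/
import Mathlib

section
/- (Odd Degree Evolution Equation, bounded-operator form.) Let H be a complex Hilbert space and L(H) its bounded linear operators, with † denoting the Hilbert-space adjoint. Let T > 0, let D₀ ∈ L(H), and let F : L(H) → L(H) be any map. Let P, Q : [0,T] → L(H) be differentiable in operator norm with ∂_t P(t) = D₀ P(t) and ∂_t Q(t) = F(P(t) P(t)†) Q(t) for all t ∈ [0,T]. Suppose that for every t ∈ [0,T] the operator Q(t) is invertible and satisfies Q(t) Q(t)† = id. Define G(t) := P(t) Q(t)⁻¹. Then P(t) P(t)† = G(t) G(t)† for all t, G is differentiable, and G satisfies ∂_t G(t) = D₀ G(t) − G(t) F(G(t) G(t)†) for all t ∈ [0,T]. -/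
open ContinuousLinearMap

/-- **Odd Degree Evolution Equation (bounded-operator form).**
Let `H` be a complex Hilbert space, `T > 0`, `D₀ ∈ L(H)`, and `F : L(H) → L(H)` any map.
Let `P, Q : [0,T] → L(H)` be differentiable with `∂_t P = D₀ P` and
`∂_t Q = F(P P†) Q` on `[0,T]`. Suppose each `Q(t)` is invertible (with inverse `Qinv t`)
and satisfies `Q(t) Q(t)† = id`. Set `G(t) := P(t) Q(t)⁻¹`. Then `P P† = G G†` on `[0,T]`,
`G` is differentiable, and `∂_t G = D₀ G − G F(G G†)` on `[0,T]`. -/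
theorem odd_degree_evolution_equation
    {H : Type*} [NormedAddCommGroup H] [InnerProductSpace ℂ H] [CompleteSpace H]
    (T : ℝ) (hT : 0 < T)
    (D₀ : H →L[ℂ] H) (F : (H →L[ℂ] H) → (H →L[ℂ] H))
    (P Q Qinv : ℝ → H →L[ℂ] H)
    (hP : ∀ t ∈ Set.Icc (0 : ℝ) T,
      HasDerivWithinAt P (D₀ ∘L P t) (Set.Icc (0 : ℝ) T) t)
    (hQ : ∀ t ∈ Set.Icc (0 : ℝ) T,
      HasDerivWithinAt Q (F (P t ∘L adjoint (P t)) ∘L Q t) (Set.Icc (0 : ℝ) T) t)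
    (hQinv_left : ∀ t ∈ Set.Icc (0 : ℝ) T, Qinv t ∘L Q t = 1)
    (hQinv_right : ∀ t ∈ Set.Icc (0 : ℝ) T, Q t ∘L Qinv t = 1)
    (hunitary : ∀ t ∈ Set.Icc (0 : ℝ) T, Q t ∘L adjoint (Q t) = 1) :
    (∀ t ∈ Set.Icc (0 : ℝ) T,
      P t ∘L adjoint (P t)
        = (P t ∘L Qinv t) ∘L adjoint (P t ∘L Qinv t)) ∧
    ∀ t ∈ Set.Icc (0 : ℝ) T,
      HasDerivWithinAt (fun s => P s ∘L Qinv s)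
        (D₀ ∘L (P t ∘L Qinv t)
          - (P t ∘L Qinv t) ∘L F ((P t ∘L Qinv t) ∘L adjoint (P t ∘L Qinv t)))
        (Set.Icc (0 : ℝ) T) t := by
  have key : ∀ t ∈ Set.Icc (0:ℝ) T, Qinv t = adjoint (Q t) := by
    intro t ht
    have h2 : Q t * adjoint (Q t) = 1 := hunitary t ht
    have h1 : Qinv t * Q t = 1 := hQinv_left t ht
    calc Qinv t = Qinv t * (Q t * adjoint (Q t)) := by rw [h2, mul_one]
    _ = (Qinv t * Q t) * adjoint (Q t) := by rw [mul_assoc]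
    _ = adjoint (Q t) := by rw [h1, one_mul]
  have hGG : ∀ t ∈ Set.Icc (0:ℝ) T,
      P t ∘L adjoint (P t) = (P t ∘L Qinv t) ∘L adjoint (P t ∘L Qinv t) := by
    intro t ht
    have h1 : adjoint (Q t) * Q t = 1 := by
      rw [show adjoint (Q t) = Qinv t from (key t ht).symm]; exact hQinv_left t ht
    rw [adjoint_comp, key t ht, adjoint_adjoint]
    show P t * adjoint (P t) = (P t * adjoint (Q t)) * (Q t * adjoint (P t))
    calc P t * adjoint (P t) = P t * (adjoint (Q t) * Q t) * adjoint (P t) := by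
          rw [h1, mul_one]
    _ = (P t * adjoint (Q t)) * (Q t * adjoint (P t)) := by noncomm_ring
  refine ⟨hGG, ?_⟩
  intro t ht
  set s := Set.Icc (0:ℝ) T
  have hRinv : ∀ r ∈ s, Ring.inverse (Q r) = Qinv r := by
    intro r hr
    have : Ring.inverse ((⟨Q r, Qinv r, hQinv_right r hr, hQinv_left r hr⟩ :
        (H →L[ℂ] H)ˣ) : H →L[ℂ] H) = Qinv r := Ring.inverse_unit _
    simpa using this
  set u : (H →L[ℂ] H)ˣ := ⟨Q t, Qinv t, hQinv_right t ht, hQinv_left t ht⟩ with hu_def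
  have hQinv_deriv : HasDerivWithinAt Qinv
      (-(Qinv t * ((F (P t ∘L adjoint (P t)) ∘L Q t) * Qinv t))) s t := by
    have h0 : HasFDerivAt Ring.inverse
        (-((mulLeftRight ℂ (H →L[ℂ] H)) ↑u⁻¹) ↑u⁻¹) (Q t) :=
      hasFDerivAt_ringInverse u
    have h := (h0.restrictScalars ℝ).comp_hasDerivWithinAt t (hQ t ht)
    have h2 := h.congr (fun r hr => (hRinv r hr).symm) ((hRinv t ht).symm)
    convert h2 using 1
    all_goals rfl
  have hprod := (hP t ht).mul hQinv_deriv
  have hF : F ((P t ∘L Qinv t) ∘L adjoint (P t ∘L Qinv t)) = F (P t ∘L adjoint (P t)) := by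
    rw [← hGG t ht]
  have hQQ : Q t * Qinv t = 1 := hQinv_right t ht
  have key_eq : D₀ ∘L (P t ∘L Qinv t) - (P t ∘L Qinv t) ∘L F (P t ∘L adjoint (P t))
      = D₀ ∘L P t * Qinv t
        + P t * -(Qinv t * ((F (P t ∘L adjoint (P t)) ∘L Q t) * Qinv t)) := by
    show D₀ * (P t * Qinv t) - (P t * Qinv t) * F (P t ∘L adjoint (P t))
        = D₀ * P t * Qinv t
          + P t * -(Qinv t * (F (P t ∘L adjoint (P t)) * Q t * Qinv t))
    rw [show Qinv t * (F (P t ∘L adjoint (P t)) * Q t * Qinv t)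
        = Qinv t * F (P t ∘L adjoint (P t)) * (Q t * Qinv t) by noncomm_ring]
    rw [hQQ]
    noncomm_ring
  rw [hF, key_eq]
  exact hprod
end

section
/- (Rank-one Riccati verification: nonlocal Fisher–Kolmogorov–Petrovskii–Piskunov-type equations.) Let T > 0, let d(X) = Σ_{j=0}^{N} d_j X^j be a polynomial with complex coefficients, and let b : ℝ → ℂ. Suppose p : ℝ × [0,T) → ℂ is smooth with ∂_t p(x;t) = Σ_{j=0}^N d_j ∂_x^j p(x;t) for all x and t, and for each t ∈ [0,T) the function z ↦ b(z) p(z;t) is integrable on ℝ. Suppose q̄ : [0,T) → ℂ is differentiable with q̄(t) ≠ 0 for all t ∈ [0,T) and q̄'(t) = ∫_ℝ b(z) p(z;t) dz. Then g(x;t) := p(x;t)/q̄(t) satisfies, for all x ∈ ℝ and t ∈ [0,T), the nonlocal nonlinear equation ∂_t g(x;t) = Σ_{j=0}^N d_j ∂_x^j g(x;t) − g(x;t) · ∫_ℝ b(z) g(z;t) dz. In particular, if q̄(0) = 1 then g(·;0) = p(·;0). -/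
open MeasureTheory Finset

lemma iteratedDeriv_smul_aux {j : ℕ} {f : ℝ → ℂ} (hf : ContDiff ℝ (j : ℕ∞) f) (c : ℂ) (x : ℝ) :
    iteratedDeriv j (fun x' => c • f x') x = c • iteratedDeriv j f x := by
  simp only [iteratedDeriv_eq_iteratedFDeriv]
  rw [iteratedFDeriv_const_smul_apply' (i := j) (hf.contDiffAt)]
  rfl

/-- **Rank-one Riccati verification: nonlocal FKPP-type equations.** Let `T > 0`,
`d(X) = Σ_{j=0}^N d_j X^j` a complex polynomial, and `b : ℝ → ℂ`. Suppose `p` is smooth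
with `∂_t p = Σ_j d_j ∂_x^j p` on `ℝ × [0,T)` and `z ↦ b(z) p(z;t)` integrable for each
`t ∈ [0,T)`; and suppose `q̄ : [0,T) → ℂ` is differentiable, nonvanishing, with
`q̄'(t) = ∫ b(z) p(z;t) dz`. Then `g(x;t) := p(x;t)/q̄(t)` satisfies
`∂_t g = Σ_j d_j ∂_x^j g − g(x;t) ∫ b(z) g(z;t) dz` on `ℝ × [0,T)`; and if `q̄(0) = 1`
then `g(·;0) = p(·;0)`. -/
theorem rank_one_riccati_nonlocal_FKPP
    (T : ℝ) (hT : 0 < T) (N : ℕ) (d : ℕ → ℂ) (b : ℝ → ℂ)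
    (p : ℝ → ℝ → ℂ)
    (hp_smooth : ContDiff ℝ (⊤ : ℕ∞) (fun v : ℝ × ℝ => p v.1 v.2))
    (hp_base : ∀ x : ℝ, ∀ t ∈ Set.Ico (0 : ℝ) T,
      HasDerivWithinAt (fun s : ℝ => p x s)
        (∑ j ∈ Finset.range (N + 1),
          d j * iteratedDeriv j (fun x' : ℝ => p x' t) x)
        (Set.Ico (0 : ℝ) T) t)
    (hp_int : ∀ t ∈ Set.Ico (0 : ℝ) T, Integrable (fun z : ℝ => b z * p z t))
    (qbar : ℝ → ℂ)
    (hqbar_ne : ∀ t ∈ Set.Ico (0 : ℝ) T, qbar t ≠ 0)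
    (hqbar_deriv : ∀ t ∈ Set.Ico (0 : ℝ) T,
      HasDerivWithinAt qbar (∫ z : ℝ, b z * p z t) (Set.Ico (0 : ℝ) T) t) :
    (∀ x : ℝ, ∀ t ∈ Set.Ico (0 : ℝ) T,
      HasDerivWithinAt (fun s : ℝ => p x s / qbar s)
        ((∑ j ∈ Finset.range (N + 1),
            d j * iteratedDeriv j (fun x' : ℝ => p x' t / qbar t) x)
          - (p x t / qbar t) * ∫ z : ℝ, b z * (p z t / qbar t))
        (Set.Ico (0 : ℝ) T) t) ∧
    (qbar 0 = 1 → ∀ x : ℝ, p x 0 / qbar 0 = p x 0) := by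
  constructor
  · intro x t ht
    have hq := hqbar_ne t ht
    have hslice : ∀ j : ℕ, ContDiff ℝ (j : ℕ∞) (fun x' : ℝ => p x' t) := by
      intro j
      exact (hp_smooth.comp (contDiff_id.prodMk contDiff_const)).of_le (by exact_mod_cast le_top)
    -- rewrite iterated derivatives of p/q
    have hiter : ∀ j : ℕ,
        iteratedDeriv j (fun x' : ℝ => p x' t / qbar t) x
          = iteratedDeriv j (fun x' : ℝ => p x' t) x / qbar t := by
      intro j
      have : (fun x' : ℝ => p x' t / qbar t) = fun x' => (qbar t)⁻¹ • p x' t := by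
        funext x'; simp [div_eq_inv_mul, smul_eq_mul]
      rw [this, iteratedDeriv_smul_aux (hslice j) ((qbar t)⁻¹) x]
      simp [div_eq_inv_mul, smul_eq_mul]
    -- rewrite the integral
    have hint : (∫ z : ℝ, b z * (p z t / qbar t))
        = (∫ z : ℝ, b z * p z t) * (qbar t)⁻¹ := by
      rw [← integral_mul_const]
      congr 1; funext z; ring
    have hder : HasDerivWithinAt (fun s => p x s / qbar s) _ _ _ := (hp_base x t ht).div (hqbar_deriv t ht) hq
    convert hder using 1
    simp only [hiter, hint]
    rw [show (∑ j ∈ Finset.range (N + 1),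
        d j * (iteratedDeriv j (fun x' : ℝ => p x' t) x / qbar t))
        = (∑ j ∈ Finset.range (N + 1),
          d j * iteratedDeriv j (fun x' : ℝ => p x' t) x) / qbar t by
      rw [Finset.sum_div]; exact Finset.sum_congr rfl fun j _ => (mul_div_assoc _ _ _).symm]
    generalize (∑ j ∈ Finset.range (N + 1),
      d j * iteratedDeriv j (fun x' : ℝ => p x' t) x) = S
    generalize (∫ z : ℝ, b z * p z t) = I
    field_simp
  · intro h0 x
    rw [h0, div_one]
end

section
/- (Second generalization: Riccati flow with a conserved quadratic constraint.) Let H be a complex Hilbert space and L(H) its bounded linear operators with adjoint †. Let T > 0 and let A₁, A₂, A₃, D₀, K ∈ L(H). Suppose P, Q : [0,T] → L(H) are differentiable in operator norm with ∂_t P(t) = D₀ P(t) and ∂_t Q(t) = (A₁ P(t) A₂ P(t)† A₃) Q(t) for all t ∈ [0,T], and suppose that for every t ∈ [0,T] the operator Q(t) is invertible and satisfies the constraint Q(t) A₂ Q(t)† = K. Define G(t) := P(t) Q(t)⁻¹. Then P(t) A₂ P(t)† = G(t) K G(t)† for all t, G is differentiable, and ∂_t G(t) = D₀ G(t) − G(t)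 A₁ G(t) K G(t)† A₃ for all t ∈ [0,T]. -/
open ContinuousLinearMap

/-- **Second generalization: Riccati flow with a conserved quadratic constraint.**
Let `H` be a complex Hilbert space, `T > 0`, and `A₁, A₂, A₃, D₀, K ∈ L(H)`. Suppose
`P, Q : [0,T] → L(H)` are differentiable with `∂_t P = D₀ P` and
`∂_t Q = (A₁ P A₂ P† A₃) Q`, each `Q(t)` is invertible (with inverse `Qinv t`) and
satisfies `Q(t) A₂ Q(t)† = K`. Set `G(t) := P(t) Q(t)⁻¹`. Then `P A₂ P† = G K G†`
on `[0,T]`, `G` is differentiable, and `∂_t G = D₀ G − G A₁ G K G† A₃` on `[0,T]`. -/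
theorem riccati_flow_conserved_quadratic_constraint
    {H : Type*} [NormedAddCommGroup H] [InnerProductSpace ℂ H] [CompleteSpace H]
    (T : ℝ) (hT : 0 < T)
    (A₁ A₂ A₃ D₀ K : H →L[ℂ] H)
    (P Q Qinv : ℝ → H →L[ℂ] H)
    (hP : ∀ t ∈ Set.Icc (0 : ℝ) T,
      HasDerivWithinAt P (D₀ ∘L P t) (Set.Icc (0 : ℝ) T) t)
    (hQ : ∀ t ∈ Set.Icc (0 : ℝ) T,
      HasDerivWithinAt Q
        ((A₁ ∘L (P t ∘L (A₂ ∘L (adjoint (P t) ∘L A₃)))) ∘L Q t)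
        (Set.Icc (0 : ℝ) T) t)
    (hQinv_left : ∀ t ∈ Set.Icc (0 : ℝ) T, Qinv t ∘L Q t = 1)
    (hQinv_right : ∀ t ∈ Set.Icc (0 : ℝ) T, Q t ∘L Qinv t = 1)
    (hconstraint : ∀ t ∈ Set.Icc (0 : ℝ) T,
      Q t ∘L (A₂ ∘L adjoint (Q t)) = K) :
    (∀ t ∈ Set.Icc (0 : ℝ) T,
      P t ∘L (A₂ ∘L adjoint (P t))
        = (P t ∘L Qinv t) ∘L (K ∘L adjoint (P t ∘L Qinv t))) ∧
    ∀ t ∈ Set.Icc (0 : ℝ) T,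
      HasDerivWithinAt (fun s => P s ∘L Qinv s)
        (D₀ ∘L (P t ∘L Qinv t)
          - (P t ∘L Qinv t) ∘L
              (A₁ ∘L ((P t ∘L Qinv t) ∘L
                (K ∘L (adjoint (P t ∘L Qinv t) ∘L A₃)))))
        (Set.Icc (0 : ℝ) T) t := by
  have hcomp : ∀ (f g : H →L[ℂ] H), f ∘L g = f * g := fun _ _ => rfl
  have hstar : ∀ (f : H →L[ℂ] H), adjoint f = star f :=
    fun f => (ContinuousLinearMap.star_eq_adjoint f).symm
  -- A₂ recovered from the constraint
  have key1 : ∀ t ∈ Set.Icc (0 : ℝ) T, Qinv t * (K * star (Qinv t)) = A₂ := by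
    intro t ht
    have hc := hconstraint t ht
    rw [hcomp, hcomp, hstar] at hc
    have hl := hQinv_left t ht; rw [hcomp] at hl
    have h1 : Qinv t * (K * star (Qinv t))
        = (Qinv t * Q t) * (A₂ * star (Qinv t * Q t)) := by
      rw [← hc, star_mul]
      simp only [mul_assoc]
    rw [h1, hl, star_one, one_mul, mul_one]
  have part1 : ∀ t ∈ Set.Icc (0 : ℝ) T,
      P t * (A₂ * star (P t)) = (P t * Qinv t) * (K * star (P t * Qinv t)) := by
    intro t ht
    rw [star_mul, ← key1 t ht]
    simp only [mul_assoc]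
  -- derivative of Qinv
  have hQinv_deriv : ∀ t ∈ Set.Icc (0 : ℝ) T,
      HasDerivWithinAt Qinv
        (-(Qinv t * ((A₁ ∘L (P t ∘L (A₂ ∘L (adjoint (P t) ∘L A₃)))) ∘L Q t) * Qinv t))
        (Set.Icc (0 : ℝ) T) t := by
    intro t ht
    have hl := hQinv_left t ht; rw [hcomp] at hl
    have hr := hQinv_right t ht; rw [hcomp] at hr
    set u : (H →L[ℂ] H)ˣ := ⟨Q t, Qinv t, hr, hl⟩ with hu
    have h1 : HasFDerivAt (Ring.inverse : (H →L[ℂ] H) → (H →L[ℂ] H))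
        (-(ContinuousLinearMap.mulLeftRight ℝ (H →L[ℂ] H) ↑u⁻¹ ↑u⁻¹)) (Q t) :=
      hasFDerivAt_ringInverse u
    have h2 := h1.comp_hasDerivWithinAt t (hQ t ht)
    have h3 : ∀ s ∈ Set.Icc (0 : ℝ) T, Qinv s = Ring.inverse (Q s) := by
      intro s hs
      have hls := hQinv_left s hs; rw [hcomp] at hls
      have hrs := hQinv_right s hs; rw [hcomp] at hrs
      exact (Ring.inverse_unit ⟨Q s, Qinv s, hrs, hls⟩).symm
    have h4 := h2.congr h3 (h3 t ht)
    have h5 : ((u⁻¹ : (H →L[ℂ] H)ˣ) : H →L[ℂ] H) = Qinv t := rfl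
    simpa only [ContinuousLinearMap.neg_apply,
      ContinuousLinearMap.mulLeftRight_apply, neg_mul, h5] using h4
  constructor
  · intro t ht
    have h := part1 t ht
    simp only [hcomp, hstar] at h ⊢
    exact h
  · intro t ht
    have hd := (hP t ht).mul (hQinv_deriv t ht)
    have hr := hQinv_right t ht; rw [hcomp] at hr
    have hXY : P t * (Qinv t * (A₁ * (P t * (A₂ * (star (P t) * A₃))) * Q t) * Qinv t)
        = (P t * Qinv t) *
            (A₁ * ((P t * Qinv t) * (K * (star (P t * Qinv t) * A₃)))) := by
      rw [← key1 t ht]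
      simp only [star_mul, mul_assoc, hr, mul_one]
    refine hd.congr_deriv (Eq.symm ?_)
    simp only [hcomp, hstar]
    rw [mul_neg, hXY, ← sub_eq_add_neg, ← mul_assoc D₀]
end

section
/- (Fourier transform of star powers.) Let c : ℝ² → ℂ be a Schwartz function and define the mixed-sign Fourier transform (F f)(k,κ) := ∫_ℝ ∫_ℝ f(x,y) e^{2πi(kx − κy)} dx dy. Then for every integer m ≥ 1, the m-fold star power c^{⋆m} is continuous and integrable on ℝ², and (F(c^{⋆m}))(k,κ) = ((F c)^{⋆m})(k,κ) for all (k,κ) ∈ ℝ². Consequently, for any real coefficients α₁, …, α_M and f^⋆(c) := Σ_{m=1}^{M} α_m c^{⋆m}, one has F(f^⋆(c)) = f^⋆(F c). -/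
open MeasureTheory Finset

/-- The star product of two kernels on `ℝ²`: `(f ⋆ g)(x,y) := ∫ f(x,z) g(z,y) dz`. -/
noncomputable def starProd2 (f g : ℝ × ℝ → ℂ) : ℝ × ℝ → ℂ :=
  fun p => ∫ z : ℝ, f (p.1, z) * g (z, p.2)

/-- The `m`-fold star power for `m ≥ 1`: `c^{⋆1} = c`, `c^{⋆(m+1)} = c ⋆ c^{⋆m}`.
(The value at `m = 0` is a junk value, set to `c`.) -/
noncomputable def starPow2 (c : ℝ × ℝ → ℂ) : ℕ → ℝ × ℝ → ℂ
  | 0 => c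
  | 1 => c
  | n + 2 => starProd2 c (starPow2 c (n + 1))

/-- The mixed-sign Fourier transform on `ℝ²`:
`(F f)(k,κ) := ∫∫ f(x,y) e^{2πi(kx − κy)} dx dy`. -/
noncomputable def mixedFourier (f : ℝ × ℝ → ℂ) (k κ : ℝ) : ℂ :=
  ∫ x : ℝ, ∫ y : ℝ,
    f (x, y) * Complex.exp (2 * Real.pi * Complex.I * (k * x - κ * y))

namespace StarAux

open FourierTransform RealInnerProductSpace

noncomputable def uw (x : ℝ) : ℝ := (1 + x ^ 2)⁻¹

lemma uw_pos (x : ℝ) : 0 < uw x := by unfold uw; positivity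
lemma uw_le_one (x : ℝ) : uw x ≤ 1 := by
  rw [uw, inv_le_one_iff₀]; right; nlinarith [sq_nonneg x]
lemma continuous_uw : Continuous uw := by
  apply Continuous.inv₀ (by continuity)
  intro x; positivity
lemma integrable_uw : Integrable uw := integrable_inv_one_add_sq

/-- Kernel class: continuous with product decay. -/
def IsKer (g : ℝ × ℝ → ℂ) : Prop :=
  Continuous g ∧ ∃ K : ℝ, 0 ≤ K ∧ ∀ x y : ℝ, ‖g (x, y)‖ ≤ K * (uw x * uw y)

lemma integrable_of_le_uw {f : ℝ → ℂ} (hm : AEStronglyMeasurable f volume) {K : ℝ}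
    (h : ∀ z, ‖f z‖ ≤ K * uw z) : Integrable f := by
  exact (integrable_uw.const_mul K).mono' hm (Filter.Eventually.of_forall h)

lemma integrable_of_le_uw2 {f : ℝ × ℝ → ℂ} (hm : AEStronglyMeasurable f volume) {K : ℝ}
    (h : ∀ p : ℝ × ℝ, ‖f p‖ ≤ K * (uw p.1 * uw p.2)) : Integrable f := by
  have hb : Integrable (fun p : ℝ × ℝ => K * (uw p.1 * uw p.2)) volume := by
    rw [Measure.volume_eq_prod]
    exact (integrable_uw.mul_prod integrable_uw).const_mul K
  exact hb.mono' hm (Filter.Eventually.of_forall h)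

lemma IsKer.integrable {g : ℝ × ℝ → ℂ} (hg : IsKer g) : Integrable g := by
  obtain ⟨hc, K, hK0, hK⟩ := hg
  exact integrable_of_le_uw2 hc.aestronglyMeasurable (fun p => hK p.1 p.2)

lemma IsKer.starProd {f g : ℝ × ℝ → ℂ} (hf : IsKer f) (hg : IsKer g) :
    IsKer (starProd2 f g) := by
  obtain ⟨hfc, Kf, hKf0, hKf⟩ := hf
  obtain ⟨hgc, Kg, hKg0, hKg⟩ := hg
  have hbz : ∀ (x y z : ℝ), ‖f (x, z) * g (z, y)‖ ≤ Kf * Kg * (uw x * uw y) * uw z := by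
    intro x y z
    rw [norm_mul]
    calc ‖f (x, z)‖ * ‖g (z, y)‖ ≤ (Kf * (uw x * uw z)) * (Kg * (uw z * uw y)) := by
          apply mul_le_mul (hKf x z) (hKg z y) (norm_nonneg _)
          exact mul_nonneg hKf0 (mul_pos (uw_pos x) (uw_pos z)).le
      _ = Kf * Kg * (uw x * uw y) * (uw z * uw z) := by ring
      _ ≤ Kf * Kg * (uw x * uw y) * (uw z * 1) := by
          apply mul_le_mul_of_nonneg_left
          · exact mul_le_mul_of_nonneg_left (uw_le_one z) (uw_pos z).le
          · have := uw_pos x; have := uw_pos y; positivity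
      _ = Kf * Kg * (uw x * uw y) * uw z := by ring
  have hint : ∀ (x y : ℝ), Integrable (fun z => f (x, z) * g (z, y)) := by
    intro x y
    apply integrable_of_le_uw (K := Kf * Kg * (uw x * uw y))
    · exact ((hfc.comp (by fun_prop)).mul (hgc.comp (by fun_prop))).aestronglyMeasurable
    · exact hbz x y
  constructor
  · -- continuity via domination
    rw [show starProd2 f g = fun p : ℝ × ℝ => ∫ z : ℝ, f (p.1, z) * g (z, p.2) from rfl]
    apply continuous_of_dominated (bound := fun z => Kf * Kg * uw z)
    · intro p
      exact ((hfc.comp (by fun_prop)).mul (hgc.comp (by fun_prop))).aestronglyMeasurable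
    · intro p
      filter_upwards with z
      calc ‖f (p.1, z) * g (z, p.2)‖ ≤ Kf * Kg * (uw p.1 * uw p.2) * uw z := hbz p.1 p.2 z
        _ ≤ Kf * Kg * 1 * uw z := by
            apply mul_le_mul_of_nonneg_right _ (uw_pos z).le
            apply mul_le_mul_of_nonneg_left _ (mul_nonneg hKf0 hKg0)
            calc uw p.1 * uw p.2 ≤ 1 * 1 := by
                  apply mul_le_mul (uw_le_one _) (uw_le_one _) (uw_pos _).le zero_le_one
              _ = 1 := by ring
        _ = Kf * Kg * uw z := by ring
    · exact (integrable_uw.const_mul _)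
    · filter_upwards with z
      exact (hfc.comp (by fun_prop)).mul (hgc.comp (by fun_prop))
  · refine ⟨Kf * Kg * (∫ z : ℝ, uw z), mul_nonneg (mul_nonneg hKf0 hKg0) (integral_nonneg fun z => (uw_pos z).le), fun x y => ?_⟩
    calc ‖∫ z : ℝ, f (x, z) * g (z, y)‖ ≤ ∫ z : ℝ, ‖f (x, z) * g (z, y)‖ :=
          norm_integral_le_integral_norm _
      _ ≤ ∫ z : ℝ, Kf * Kg * (uw x * uw y) * uw z := by
          apply integral_mono (hint x y).norm ((integrable_uw.const_mul _)) (hbz x y)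
      _ = Kf * Kg * (uw x * uw y) * ∫ z : ℝ, uw z := integral_const_mul _ _
      _ = Kf * Kg * (∫ z : ℝ, uw z) * (uw x * uw y) := by ring

lemma IsKer.starPow {c : ℝ × ℝ → ℂ} (hc : IsKer c) : ∀ m : ℕ, IsKer (starPow2 c m)
  | 0 => hc
  | 1 => hc
  | (n + 2) => hc.starProd (IsKer.starPow hc (n + 1))

lemma norm_char (a : ℝ) : ‖Complex.exp (2 * Real.pi * Complex.I * a)‖ = 1 := by
  rw [show (2 * Real.pi * Complex.I * a : ℂ) = ((2 * Real.pi * a : ℝ) : ℂ) * Complex.I by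
    push_cast; ring]
  rw [Complex.norm_exp_ofReal_mul_I]

/-- Schwartz decay in product form. -/
lemma schwartz_decay4 {E : Type*} [NormedAddCommGroup E] [NormedSpace ℝ E]
    (f : SchwartzMap E ℂ) : ∃ C : ℝ, 0 ≤ C ∧ ∀ x : E, (1 + ‖x‖) ^ 4 * ‖f x‖ ≤ C := by
  refine ⟨2 ^ 4 * ((Finset.Iic ((4:ℕ),(0:ℕ))).sup fun m => SchwartzMap.seminorm ℝ m.1 m.2) f,
    ?_, fun x => ?_⟩
  · positivity
  · have := SchwartzMap.one_add_le_sup_seminorm_apply (𝕜 := ℝ) (m := ((4:ℕ),(0:ℕ)))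
      (k := 4) (n := 0) le_rfl le_rfl f x
    rwa [norm_iteratedFDeriv_zero] at this


lemma le_uw_of_decay4 {f : ℝ × ℝ → ℂ} {C : ℝ}
    (h : ∀ p : ℝ × ℝ, (1 + ‖p‖) ^ 4 * ‖f p‖ ≤ C) (x y : ℝ) :
    ‖f (x, y)‖ ≤ C * (uw x * uw y) := by
  have hx : |x| ≤ ‖(x, y)‖ := norm_fst_le (x, y)
  have hy : |y| ≤ ‖(x, y)‖ := norm_snd_le (x, y)
  have hn : (0:ℝ) ≤ ‖(x, y)‖ := norm_nonneg _
  have h1 : (1 + x ^ 2) * (1 + y ^ 2) ≤ (1 + ‖(x, y)‖) ^ 4 := by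
    have h2 : 1 + x ^ 2 ≤ (1 + ‖(x, y)‖) ^ 2 := by nlinarith [abs_nonneg x, sq_abs x]
    have h3 : 1 + y ^ 2 ≤ (1 + ‖(x, y)‖) ^ 2 := by nlinarith [abs_nonneg y, sq_abs y]
    calc (1 + x ^ 2) * (1 + y ^ 2) ≤ (1 + ‖(x, y)‖) ^ 2 * (1 + ‖(x, y)‖) ^ 2 := by
          apply mul_le_mul h2 h3 (by positivity) (by positivity)
      _ = (1 + ‖(x, y)‖) ^ 4 := by ring
  have hpos : (0:ℝ) < (1 + x ^ 2) * (1 + y ^ 2) := by positivity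
  rw [show uw x * uw y = ((1 + x ^ 2) * (1 + y ^ 2))⁻¹ by rw [uw, uw, mul_inv],
    ← div_eq_mul_inv, le_div_iff₀ hpos]
  calc ‖f (x, y)‖ * ((1 + x ^ 2) * (1 + y ^ 2)) ≤ ‖f (x, y)‖ * (1 + ‖(x, y)‖) ^ 4 := by
        apply mul_le_mul_of_nonneg_left h1 (norm_nonneg _)
    _ = (1 + ‖(x, y)‖) ^ 4 * ‖f (x, y)‖ := by ring
    _ ≤ C := h (x, y)


lemma isKer_schwartz (c : SchwartzMap (ℝ × ℝ) ℂ) : IsKer (fun p => c p) := by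
  obtain ⟨C, hC0, hC⟩ := schwartz_decay4 c
  exact ⟨c.continuous, C, hC0, fun x y => le_uw_of_decay4 hC x y⟩

/-! ### Euclidean space plumbing -/

noncomputable def Lc : (ℝ × ℝ) ≃L[ℝ] EuclideanSpace ℝ (Fin 2) :=
  ((LinearEquiv.finTwoArrow ℝ ℝ).symm ≪≫ₗ
    (WithLp.linearEquiv 2 ℝ (Fin 2 → ℝ)).symm).toContinuousLinearEquiv

noncomputable def Tm : EuclideanSpace ℝ (Fin 2) ≃ᵐ ℝ × ℝ :=
  (MeasurableEquiv.toLp 2 (Fin 2 → ℝ)).symm.trans MeasurableEquiv.finTwoArrow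

lemma Tm_measurePreserving : MeasurePreserving (⇑Tm) volume volume :=
  (volume_preserving_finTwoArrow ℝ).comp
    (EuclideanSpace.volume_preserving_symm_measurableEquiv_toLp (Fin 2))

lemma Lc_Tm (v : EuclideanSpace ℝ (Fin 2)) : Lc (Tm v) = v := by
  ext i
  fin_cases i <;> rfl

lemma Lc_apply_zero (p : ℝ × ℝ) : Lc p 0 = p.1 := rfl
lemma Lc_apply_one (p : ℝ × ℝ) : Lc p 1 = p.2 := rfl

lemma integral_comp_Lc (h : EuclideanSpace ℝ (Fin 2) → ℂ) :
    ∫ p : ℝ × ℝ, h (Lc p) = ∫ v : EuclideanSpace ℝ (Fin 2), h v := by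
  have := Tm_measurePreserving.integral_comp Tm.measurableEmbedding (fun p => h (Lc p))
  rw [← this]
  exact integral_congr_ae (Filter.Eventually.of_forall fun v => by simp only []; rw [Lc_Tm])

lemma inner_Lc (p q : ℝ × ℝ) : ⟪Lc p, Lc q⟫ = p.1 * q.1 + p.2 * q.2 := by
  rw [PiLp.inner_apply, Fin.sum_univ_two]
  simp [Lc_apply_zero, Lc_apply_one, RCLike.inner_apply]
  ring

lemma coord_le_norm (w : EuclideanSpace ℝ (Fin 2)) (i : Fin 2) : |w i| ≤ ‖w‖ := by
  rw [EuclideanSpace.norm_eq, ← Real.sqrt_sq_eq_abs]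
  apply Real.sqrt_le_sqrt
  rw [Fin.sum_univ_two]
  fin_cases i <;> simp [sq_abs] <;> positivity


lemma le_uw_of_bounds {a x y C n : ℝ} (hx : |x| ≤ n) (hy : |y| ≤ n) (hn : 0 ≤ n)
    (h : (1 + n) ^ 4 * a ≤ C) (ha : 0 ≤ a) : a ≤ C * (uw x * uw y) := by
  have h2 : 1 + x ^ 2 ≤ (1 + n) ^ 2 := by nlinarith [abs_nonneg x, sq_abs x]
  have h3 : 1 + y ^ 2 ≤ (1 + n) ^ 2 := by nlinarith [abs_nonneg y, sq_abs y]
  have h1 : (1 + x ^ 2) * (1 + y ^ 2) ≤ (1 + n) ^ 4 := by nlinarith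
  have hpos : (0:ℝ) < (1 + x ^ 2) * (1 + y ^ 2) := by positivity
  rw [show uw x * uw y = ((1 + x ^ 2) * (1 + y ^ 2))⁻¹ by rw [uw, uw, mul_inv],
    ← div_eq_mul_inv, le_div_iff₀ hpos]
  nlinarith

/-- Integrability of a function times a character. -/
lemma integrable_mul_char {α : Type*} [MeasurableSpace α] [TopologicalSpace α]
    [OpensMeasurableSpace α] {μ : Measure α}
    {f : α → ℂ} (hf : Integrable f μ) {g : α → ℝ} (hg : Continuous g) :
    Integrable (fun p => f p * Complex.exp (2 * Real.pi * Complex.I * g p)) μ := by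
  have h := hf.bdd_mul
    (Continuous.aestronglyMeasurable (by continuity :
      Continuous fun p : α => Complex.exp (2 * Real.pi * Complex.I * g p)))
    (c := 1) (Filter.Eventually.of_forall fun p => le_of_eq (norm_char (g p)))
  simpa [mul_comm] using h

lemma integrable_mul_char' {f : ℝ × ℝ → ℂ} (hf : Integrable f) (k κ : ℝ) :
    Integrable
      (fun p : ℝ × ℝ => f p * Complex.exp (2 * Real.pi * Complex.I * (k * p.1 - κ * p.2))) := by
  have h := integrable_mul_char hf (g := fun p : ℝ × ℝ => k * p.1 - κ * p.2) (by continuity)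
  exact h.congr (Filter.Eventually.of_forall fun p => by norm_cast)

/-- mixedFourier as a single integral over the product space. -/
lemma mixedFourier_eq_prodIntegral {f : ℝ × ℝ → ℂ} (hf : Integrable f) (k κ : ℝ) :
    mixedFourier f k κ
      = ∫ p : ℝ × ℝ, f p * Complex.exp (2 * Real.pi * Complex.I * (k * p.1 - κ * p.2)) := by
  have hint := integrable_mul_char' hf k κ
  have hint2 : Integrable (Function.uncurry fun x y =>
      f (x, y) * Complex.exp (2 * Real.pi * Complex.I * (k * x - κ * y)))
      ((volume : Measure ℝ).prod (volume : Measure ℝ)) := by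
    rw [← Measure.volume_eq_prod]
    exact hint.congr (Filter.Eventually.of_forall fun p => by simp [Function.uncurry])
  rw [mixedFourier, integral_integral hint2, ← Measure.volume_eq_prod]

noncomputable def cE (c : SchwartzMap (ℝ × ℝ) ℂ) : SchwartzMap (EuclideanSpace ℝ (Fin 2)) ℂ :=
  SchwartzMap.compCLMOfContinuousLinearEquiv ℝ Lc.symm c

lemma mixedFourier_schwartz_eq (c : SchwartzMap (ℝ × ℝ) ℂ) (k κ : ℝ) :
    mixedFourier (fun p => c p) k κ = 𝓕 (fun v => cE c v) (Lc (-k, κ)) := by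
  rw [mixedFourier_eq_prodIntegral (isKer_schwartz c).integrable k κ]
  rw [Real.fourier_eq, ← integral_comp_Lc]
  apply integral_congr_ae
  filter_upwards with p
  have h1 : cE c (Lc p) = c p := by
    rw [cE, SchwartzMap.compCLMOfContinuousLinearEquiv_apply]
    simp only [Function.comp_apply, ContinuousLinearEquiv.symm_apply_apply]
  rw [inner_Lc, h1, Circle.smul_def, Real.fourierChar_apply]
  rw [show ((2 * Real.pi * -(p.1 * -k + p.2 * κ) : ℝ) : ℂ) * Complex.I
      = 2 * Real.pi * Complex.I * (k * p.1 - κ * p.2) by push_cast; ring]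
  rw [smul_eq_mul]
  ring

lemma isKer_mf (c : SchwartzMap (ℝ × ℝ) ℂ) :
    IsKer (fun p : ℝ × ℝ => mixedFourier (fun q => c q) p.1 p.2) := by
  set D := SchwartzMap.fourierTransformCLE ℝ (SchwartzMap (EuclideanSpace ℝ (Fin 2)) ℂ) (cE c) with hD
  have hDv : ∀ p : ℝ × ℝ, mixedFourier (fun q => c q) p.1 p.2 = D (Lc (-p.1, p.2)) := by
    intro p
    exact (mixedFourier_schwartz_eq c p.1 p.2).trans rfl
  obtain ⟨C, hC0, hC⟩ := schwartz_decay4 D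
  constructor
  · have : Continuous fun p : ℝ × ℝ => D (Lc (-p.1, p.2)) :=
      D.continuous.comp (Lc.continuous.comp (by continuity))
    exact this.congr fun p => (hDv p).symm
  · refine ⟨C, hC0, fun x y => ?_⟩
    rw [show ((fun p : ℝ × ℝ => mixedFourier (fun q => c q) p.1 p.2) (x, y))
        = D (Lc (-x, y)) from hDv (x, y)]
    set w := Lc (-x, y) with hw
    have hx : |x| ≤ ‖w‖ := by
      have := coord_le_norm w 0
      rwa [hw, Lc_apply_zero, abs_neg] at this
    have hy : |y| ≤ ‖w‖ := by
      have := coord_le_norm w 1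
      rwa [hw, Lc_apply_one] at this
    exact le_uw_of_bounds hx hy (norm_nonneg _) (hC w) (norm_nonneg _)



/-! ### characters and partial transforms -/

noncomputable def ch (t : ℝ) : ℂ := Complex.exp (2 * Real.pi * Complex.I * t)

lemma norm_ch (t : ℝ) : ‖ch t‖ = 1 := norm_char t
lemma continuous_ch : Continuous ch := by unfold ch; continuity
lemma ch_mul (a b : ℝ) : ch a * ch b = ch (a + b) := by
  rw [ch, ch, ch, ← Complex.exp_add]; congr 1; push_cast; ring

lemma uw_nonneg (x : ℝ) : 0 ≤ uw x := (uw_pos x).le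
lemma uw_mul_le_one (x z : ℝ) : uw x * uw z ≤ 1 := by
  nlinarith [uw_pos x, uw_pos z, uw_le_one x, uw_le_one z]

noncomputable def mf' (f : ℝ × ℝ → ℂ) (k κ : ℝ) : ℂ :=
  ∫ x : ℝ, ∫ y : ℝ, f (x, y) * ch (k * x - κ * y)

lemma mf_eq_mf' (f : ℝ × ℝ → ℂ) (k κ : ℝ) : mixedFourier f k κ = mf' f k κ := by
  refine integral_congr_ae (.of_forall fun x => integral_congr_ae (.of_forall fun y => ?_))
  simp only [ch]
  congr 2
  push_cast; ring

lemma swap_integral {F : ℝ → ℝ → ℂ} (hm : Continuous fun p : ℝ × ℝ => F p.1 p.2) {K : ℝ}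
    (hb : ∀ x y, ‖F x y‖ ≤ K * (uw x * uw y)) :
    ∫ x : ℝ, ∫ y : ℝ, F x y = ∫ y : ℝ, ∫ x : ℝ, F x y := by
  apply integral_integral_swap
  rw [← Measure.volume_eq_prod]
  exact integrable_of_le_uw2 hm.aestronglyMeasurable (fun p => hb p.1 p.2)

lemma partial_fst {c : ℝ × ℝ → ℂ} (hc : IsKer c) (k : ℝ) :
    Continuous (fun z => ∫ x : ℝ, c (x, z) * ch (k * x)) ∧
    ∃ K, 0 ≤ K ∧ ∀ z, ‖∫ x : ℝ, c (x, z) * ch (k * x)‖ ≤ K * uw z := by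
  obtain ⟨hcc, Kc, hKc0, hKc⟩ := hc
  have hmz : ∀ z : ℝ, Continuous (fun x => c (x, z) * ch (k * x)) := fun z =>
    (hcc.comp (continuous_id.prodMk continuous_const)).mul
      (continuous_ch.comp (continuous_const.mul continuous_id))
  have hbz : ∀ z x : ℝ, ‖c (x, z) * ch (k * x)‖ ≤ Kc * uw z * uw x := by
    intro z x
    rw [norm_mul, norm_ch, mul_one]
    calc ‖c (x, z)‖ ≤ Kc * (uw x * uw z) := hKc x z
      _ = Kc * uw z * uw x := by ring
  constructor
  · apply continuous_of_dominated (bound := fun x => Kc * uw x)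
    · exact fun z => (hmz z).aestronglyMeasurable
    · intro z
      filter_upwards with x
      calc ‖c (x, z) * ch (k * x)‖ ≤ Kc * uw z * uw x := hbz z x
        _ ≤ Kc * 1 * uw x := by
            apply mul_le_mul_of_nonneg_right _ (uw_nonneg x)
            exact mul_le_mul_of_nonneg_left (uw_le_one z) hKc0
        _ = Kc * uw x := by ring
    · exact integrable_uw.const_mul _
    · filter_upwards with x
      exact (hcc.comp (continuous_const.prodMk continuous_id)).mul continuous_const
  · refine ⟨Kc * ∫ x : ℝ, uw x,
      mul_nonneg hKc0 (integral_nonneg uw_nonneg), fun z => ?_⟩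
    have hint : Integrable (fun x => c (x, z) * ch (k * x)) :=
      integrable_of_le_uw (hmz z).aestronglyMeasurable (K := Kc * uw z)
        (fun x => hbz z x)
    calc ‖∫ x : ℝ, c (x, z) * ch (k * x)‖ ≤ ∫ x : ℝ, ‖c (x, z) * ch (k * x)‖ :=
          norm_integral_le_integral_norm _
      _ ≤ ∫ x : ℝ, Kc * uw z * uw x :=
          integral_mono hint.norm (integrable_uw.const_mul _) (hbz z)
      _ = Kc * uw z * ∫ x : ℝ, uw x := integral_const_mul _ _
      _ = Kc * (∫ x : ℝ, uw x) * uw z := by ring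

lemma partial_snd {g : ℝ × ℝ → ℂ} (hg : IsKer g) (κ : ℝ) :
    Continuous (fun z => ∫ y : ℝ, g (z, y) * ch (-(κ * y))) ∧
    ∃ K, 0 ≤ K ∧ ∀ z, ‖∫ y : ℝ, g (z, y) * ch (-(κ * y))‖ ≤ K * uw z := by
  obtain ⟨hgc, Kg, hKg0, hKg⟩ := hg
  have hmz : ∀ z : ℝ, Continuous (fun y => g (z, y) * ch (-(κ * y))) := fun z =>
    (hgc.comp (continuous_const.prodMk continuous_id)).mul
      (continuous_ch.comp (by continuity))
  have hbz : ∀ z y : ℝ, ‖g (z, y) * ch (-(κ * y))‖ ≤ Kg * uw z * uw y := by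
    intro z y
    rw [norm_mul, norm_ch, mul_one]
    calc ‖g (z, y)‖ ≤ Kg * (uw z * uw y) := hKg z y
      _ = Kg * uw z * uw y := by ring
  constructor
  · apply continuous_of_dominated (bound := fun y => Kg * uw y)
    · exact fun z => (hmz z).aestronglyMeasurable
    · intro z
      filter_upwards with y
      calc ‖g (z, y) * ch (-(κ * y))‖ ≤ Kg * uw z * uw y := hbz z y
        _ ≤ Kg * 1 * uw y := by
            apply mul_le_mul_of_nonneg_right _ (uw_nonneg y)
            exact mul_le_mul_of_nonneg_left (uw_le_one z) hKg0
        _ = Kg * uw y := by ring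
    · exact integrable_uw.const_mul _
    · filter_upwards with y
      exact (hgc.comp (continuous_id.prodMk continuous_const)).mul continuous_const
  · refine ⟨Kg * ∫ y : ℝ, uw y,
      mul_nonneg hKg0 (integral_nonneg uw_nonneg), fun z => ?_⟩
    have hint : Integrable (fun y => g (z, y) * ch (-(κ * y))) :=
      integrable_of_le_uw (hmz z).aestronglyMeasurable (K := Kg * uw z)
        (fun y => hbz z y)
    calc ‖∫ y : ℝ, g (z, y) * ch (-(κ * y))‖ ≤ ∫ y : ℝ, ‖g (z, y) * ch (-(κ * y))‖ :=
          norm_integral_le_integral_norm _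
      _ ≤ ∫ y : ℝ, Kg * uw z * uw y :=
          integral_mono hint.norm (integrable_uw.const_mul _) (hbz z)
      _ = Kg * uw z * ∫ y : ℝ, uw y := integral_const_mul _ _
      _ = Kg * (∫ y : ℝ, uw y) * uw z := by ring


lemma inner_real_eq (x y : ℝ) : ⟪x, y⟫ = x * y := by simp [RCLike.inner_apply]; ring

lemma flip_innerl : (innerₗ ℝ).flip = innerₗ ℝ := by
  apply LinearMap.ext; intro x; apply LinearMap.ext; intro y
  simpa using real_inner_comm x y

lemma mixedFourier_starProd {c g d G : ℝ × ℝ → ℂ}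
    (hc : IsKer c) (hg : IsKer g) (hG : IsKer G)
    (hcd : ∀ k κ : ℝ, mixedFourier c k κ = d (k, κ))
    (hgG : ∀ k κ : ℝ, mixedFourier g k κ = G (k, κ)) (k κ : ℝ) :
    mixedFourier (starProd2 c g) k κ = starProd2 d G (k, κ) := by
  obtain ⟨hcc, Kc, hKc0, hKc⟩ := id hc
  obtain ⟨hgc, Kg, hKg0, hKg⟩ := id hg
  obtain ⟨hGc, KG, hKG0, hKG⟩ := id hG
  let A : ℝ → ℂ := fun z => ∫ x : ℝ, c (x, z) * ch (k * x)
  let B : ℝ → ℂ := fun z => ∫ y : ℝ, g (z, y) * ch (-(κ * y))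
  have hAc : Continuous A := (partial_fst hc k).1
  obtain ⟨KA, hKA0, hKA⟩ := (partial_fst hc k).2
  have hBc : Continuous B := (partial_snd hg κ).1
  obtain ⟨KB, hKB0, hKB⟩ := (partial_snd hg κ).2
  have hAint : Integrable A := integrable_of_le_uw hAc.aestronglyMeasurable hKA
  have hBint : Integrable B := integrable_of_le_uw hBc.aestronglyMeasurable hKB
  -- Step 1 : LHS as ∫ A * B
  have step1 : mixedFourier (starProd2 c g) k κ = ∫ z : ℝ, A z * B z := by
    rw [mf_eq_mf']
    unfold mf' starProd2
    have inner1 : ∀ x : ℝ,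
        (∫ y : ℝ, (∫ z : ℝ, c ((x, y).1, z) * g (z, (x, y).2)) * ch (k * x - κ * y))
          = ∫ z : ℝ, (c (x, z) * ch (k * x)) * B z := by
      intro x
      have e1 : ∀ y : ℝ, (∫ z : ℝ, c ((x, y).1, z) * g (z, (x, y).2)) * ch (k * x - κ * y)
          = ∫ z : ℝ, c (x, z) * g (z, y) * ch (k * x - κ * y) := fun y =>
        (integral_mul_const _ _).symm
      rw [integral_congr_ae (.of_forall e1)]
      rw [swap_integral (K := Kc * Kg)
        (hm := ((hcc.comp (continuous_const.prodMk continuous_snd)).mul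
            (hgc.comp (continuous_snd.prodMk continuous_fst))).mul
          (continuous_ch.comp (by continuity)))
        (hb := ?_)]
      · apply integral_congr_ae
        filter_upwards with z
        have e2 : ∀ y : ℝ, c (x, z) * g (z, y) * ch (k * x - κ * y)
            = (c (x, z) * ch (k * x)) * (g (z, y) * ch (-(κ * y))) := by
          intro y
          rw [show k * x - κ * y = k * x + -(κ * y) by ring, ← ch_mul]
          ring
        rw [integral_congr_ae (.of_forall e2), integral_const_mul]
      · intro y z
        rw [norm_mul, norm_ch, mul_one, norm_mul]
        calc ‖c (x, z)‖ * ‖g (z, y)‖ ≤ (Kc * (uw x * uw z)) * (Kg * (uw z * uw y)) := by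
              apply mul_le_mul (hKc x z) (hKg z y) (norm_nonneg _)
                (mul_nonneg hKc0 (mul_nonneg (uw_nonneg x) (uw_nonneg z)))
          _ = Kc * Kg * (uw y * uw z) * (uw x * uw z) := by ring
          _ ≤ Kc * Kg * (uw y * uw z) * 1 := by
              apply mul_le_mul_of_nonneg_left (uw_mul_le_one x z)
              exact mul_nonneg (mul_nonneg hKc0 hKg0) (mul_nonneg (uw_nonneg y) (uw_nonneg z))
          _ = Kc * Kg * (uw y * uw z) := mul_one _
    rw [integral_congr_ae (.of_forall inner1)]
    rw [swap_integral (K := Kc * KB)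
      (hm := ((hcc.mul (continuous_ch.comp (by continuity))).mul (hBc.comp continuous_snd)))
      (hb := ?_)]
    · apply integral_congr_ae
      filter_upwards with z
      exact integral_mul_const _ _
    · intro x z
      rw [norm_mul, norm_mul, norm_ch, mul_one]
      calc ‖c (x, z)‖ * ‖B z‖ ≤ (Kc * (uw x * uw z)) * (KB * uw z) := by
            apply mul_le_mul (hKc x z) (hKB z) (norm_nonneg _)
              (mul_nonneg hKc0 (mul_nonneg (uw_nonneg x) (uw_nonneg z)))
        _ = Kc * KB * (uw x * uw z) * uw z := by ring
        _ ≤ Kc * KB * (uw x * uw z) * 1 := by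
            apply mul_le_mul_of_nonneg_left (uw_le_one z)
            exact mul_nonneg (mul_nonneg hKc0 hKB0) (mul_nonneg (uw_nonneg x) (uw_nonneg z))
        _ = Kc * KB * (uw x * uw z) := mul_one _
  -- Step 2 : d (k, s) = 𝓕 A s
  have step2 : ∀ s : ℝ, d (k, s) = 𝓕 A s := by
    intro s
    rw [← hcd k s, mf_eq_mf']
    unfold mf'
    have e1 : ∀ x y : ℝ, c (x, y) * ch (k * x - s * y)
        = (c (x, y) * ch (k * x)) * ch (-(s * y)) := by
      intro x y
      rw [show k * x - s * y = k * x + -(s * y) by ring, ← ch_mul]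
      ring
    rw [show (∫ x : ℝ, ∫ y : ℝ, c (x, y) * ch (k * x - s * y))
        = ∫ x : ℝ, ∫ y : ℝ, (c (x, y) * ch (k * x)) * ch (-(s * y)) from
      integral_congr_ae (.of_forall fun x => integral_congr_ae (.of_forall fun y => e1 x y))]
    rw [swap_integral (K := Kc)
      (hm := ((hcc.mul (continuous_ch.comp (by continuity))).mul
        (continuous_ch.comp (by continuity))))
      (hb := ?_)]
    · rw [Real.fourier_real_eq_integral_exp_smul]
      apply integral_congr_ae
      filter_upwards with v
      rw [integral_mul_const, smul_eq_mul]
      rw [show (((-2 : ℝ) * Real.pi * v * s : ℝ) : ℂ) * Complex.I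
          = 2 * Real.pi * Complex.I * ((-(s * v) : ℝ) : ℂ) by push_cast; ring]
      rw [← ch]
      ring
    · intro x y
      rw [norm_mul, norm_mul, norm_ch, norm_ch, mul_one, mul_one]
      exact hKc x y
  -- Step 3 : G (s, κ) = 𝓕⁻ B s
  have step3 : ∀ s : ℝ, G (s, κ) = 𝓕⁻ B s := by
    intro s
    rw [← hgG s κ, mf_eq_mf']
    unfold mf'
    rw [Real.fourierInv_eq']
    apply integral_congr_ae
    filter_upwards with z
    have e1 : ∀ y : ℝ, g (z, y) * ch (s * z - κ * y)
        = ch (s * z) * (g (z, y) * ch (-(κ * y))) := by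
      intro y
      rw [show s * z - κ * y = s * z + -(κ * y) by ring, ← ch_mul]
      ring
    rw [integral_congr_ae (.of_forall e1), integral_const_mul]
    rw [inner_real_eq, smul_eq_mul]
    rw [show ((2 * Real.pi * (z * s) : ℝ) : ℂ) * Complex.I
        = 2 * Real.pi * Complex.I * ((s * z : ℝ) : ℂ) by push_cast; ring]
    rw [← ch]
  -- integrability on the Fourier side
  have hGsint : Integrable (fun s => G (s, κ)) := by
    apply integrable_of_le_uw (K := KG)
    · exact (hGc.comp (continuous_id.prodMk continuous_const)).aestronglyMeasurable
    · intro s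
      calc ‖G (s, κ)‖ ≤ KG * (uw s * uw κ) := hKG s κ
        _ = KG * uw κ * uw s := by ring
        _ ≤ KG * 1 * uw s := by
            apply mul_le_mul_of_nonneg_right _ (uw_nonneg s)
            exact mul_le_mul_of_nonneg_left (uw_le_one κ) hKG0
        _ = KG * uw s := by ring
  have hFinvB_eq : 𝓕⁻ B = fun s => G (s, κ) :=
    funext fun s => (step3 s).symm
  have hFinvBint : Integrable (𝓕⁻ B) := by
    rw [hFinvB_eq]; exact hGsint
  have hFBint : Integrable (𝓕 B) := by
    have he : 𝓕 B = fun s => 𝓕⁻ B (-s) := by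
      funext s
      rw [Real.fourierInv_eq_fourier_neg, neg_neg]
    rw [he]
    exact hFinvBint.comp_neg
  have hinv : 𝓕 (𝓕⁻ B) = B :=
    hBc.fourier_fourierInv_eq hBint hFBint
  -- Parseval / multiplication formula
  have hL : Continuous fun p : ℝ × ℝ => (innerₗ ℝ) p.1 p.2 := by
    simpa using (continuous_inner (𝕜 := ℝ) (E := ℝ))
  have hmul := VectorFourier.integral_fourierIntegral_smul_eq_flip (L := innerₗ ℝ)
    Real.continuous_fourierChar hL hAint hFinvBint
  rw [flip_innerl] at hmul
  have hmul' : (∫ s : ℝ, 𝓕 A s * 𝓕⁻ B s)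
      = ∫ z : ℝ, A z * 𝓕 (𝓕⁻ B) z := by
    simp only [smul_eq_mul] at hmul
    exact hmul
  calc mixedFourier (starProd2 c g) k κ = ∫ z : ℝ, A z * B z := step1
    _ = ∫ z : ℝ, A z * 𝓕 (𝓕⁻ B) z := by rw [hinv]
    _ = ∫ s : ℝ, 𝓕 A s * 𝓕⁻ B s := hmul'.symm
    _ = ∫ s : ℝ, d (k, s) * G (s, κ) := by
        apply integral_congr_ae
        filter_upwards with s
        rw [step2 s, step3 s]
    _ = starProd2 d G (k, κ) := rfl

end StarAux

/-- **Fourier transform of star powers.** For a Schwartz function `c` on `ℝ²` and every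
`m ≥ 1`, the `m`-fold star power `c^{⋆m}` is continuous and integrable on `ℝ²` and
`F(c^{⋆m}) = (F c)^{⋆m}`. Consequently, for real coefficients `α₁, …, α_M` and
`f^⋆(c) := Σ_{m=1}^{M} α_m c^{⋆m}`, one has `F(f^⋆(c)) = f^⋆(F c)`. -/
theorem mixedFourier_star_powers (c : SchwartzMap (ℝ × ℝ) ℂ) :
    (∀ m : ℕ, 1 ≤ m →
      Continuous (starPow2 (fun p : ℝ × ℝ => c p) m) ∧
      Integrable (starPow2 (fun p : ℝ × ℝ => c p) m) (volume : Measure (ℝ × ℝ)) ∧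
      ∀ k κ : ℝ,
        mixedFourier (starPow2 (fun p : ℝ × ℝ => c p) m) k κ
          = starPow2 (fun p : ℝ × ℝ => mixedFourier (fun q : ℝ × ℝ => c q) p.1 p.2)
              m (k, κ)) ∧
    ∀ (M : ℕ) (α : ℕ → ℝ), ∀ k κ : ℝ,
      mixedFourier
        (fun p : ℝ × ℝ =>
          ∑ m ∈ Finset.Icc 1 M, (α m : ℂ) * starPow2 (fun q : ℝ × ℝ => c q) m p)
        k κ
        = ∑ m ∈ Finset.Icc 1 M,
            (α m : ℂ)
              * starPow2
                  (fun p : ℝ × ℝ => mixedFourier (fun q : ℝ × ℝ => c q) p.1 p.2)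
                  m (k, κ) := by
  have hc : StarAux.IsKer (fun p : ℝ × ℝ => c p) := StarAux.isKer_schwartz c
  have hd : StarAux.IsKer (fun p : ℝ × ℝ => mixedFourier (fun q : ℝ × ℝ => c q) p.1 p.2) :=
    StarAux.isKer_mf c
  have key : ∀ m : ℕ, 1 ≤ m →
      StarAux.IsKer (starPow2 (fun p : ℝ × ℝ => c p) m) ∧
      ∀ k κ : ℝ, mixedFourier (starPow2 (fun p : ℝ × ℝ => c p) m) k κ
        = starPow2 (fun p : ℝ × ℝ => mixedFourier (fun q : ℝ × ℝ => c q) p.1 p.2) m (k, κ) := by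
    intro m hm
    induction m, hm using Nat.le_induction with
    | base => exact ⟨hc, fun k κ => rfl⟩
    | succ n hn ih =>
      obtain ⟨w, rfl⟩ : ∃ w, n = w + 1 := ⟨n - 1, (Nat.succ_pred_eq_of_pos hn).symm⟩
      refine ⟨hc.starProd ih.1, fun k κ => ?_⟩
      exact StarAux.mixedFourier_starProd hc ih.1 (hd.starPow (w + 1))
        (fun k κ => rfl) ih.2 k κ
  constructor
  · exact fun m hm => ⟨(key m hm).1.1, (key m hm).1.integrable, (key m hm).2⟩
  · intro M α k κ
    have hker : ∀ m : ℕ, StarAux.IsKer (starPow2 (fun p : ℝ × ℝ => c p) m) := hc.starPow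
    have hint : ∀ m : ℕ, Integrable
        (fun p : ℝ × ℝ => (α m : ℂ) * starPow2 (fun q : ℝ × ℝ => c q) m p) :=
      fun m => ((hker m).integrable).const_mul _
    have hfint : Integrable (fun p : ℝ × ℝ =>
        ∑ m ∈ Finset.Icc 1 M, (α m : ℂ) * starPow2 (fun q : ℝ × ℝ => c q) m p) :=
      integrable_finset_sum _ (fun m _ => hint m)
    rw [StarAux.mixedFourier_eq_prodIntegral hfint k κ]
    have e1 : ∀ p : ℝ × ℝ,
        (∑ m ∈ Finset.Icc 1 M, (α m : ℂ) * starPow2 (fun q : ℝ × ℝ => c q) m p)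
          * Complex.exp (2 * Real.pi * Complex.I * (k * p.1 - κ * p.2))
        = ∑ m ∈ Finset.Icc 1 M, ((α m : ℂ) * starPow2 (fun q : ℝ × ℝ => c q) m p)
          * Complex.exp (2 * Real.pi * Complex.I * (k * p.1 - κ * p.2)) := by
      intro p
      rw [Finset.sum_mul]
    rw [integral_congr_ae (.of_forall e1)]
    rw [integral_finset_sum _ (fun m _ => StarAux.integrable_mul_char' (hint m) k κ)]
    apply Finset.sum_congr rfl
    intro m hm
    have hm1 : 1 ≤ m := (Finset.mem_Icc.mp hm).1
    have e2 : ∀ p : ℝ × ℝ,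
        ((α m : ℂ) * starPow2 (fun q : ℝ × ℝ => c q) m p)
          * Complex.exp (2 * Real.pi * Complex.I * (k * p.1 - κ * p.2))
        = (α m : ℂ) * (starPow2 (fun q : ℝ × ℝ => c q) m p
          * Complex.exp (2 * Real.pi * Complex.I * (k * p.1 - κ * p.2))) := by
      intro p; ring
    rw [integral_congr_ae (.of_forall e2), integral_const_mul,
      ← StarAux.mixedFourier_eq_prodIntegral (hker m).integrable k κ, (key m hm1).2 k κ]
end
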